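/- Let l ≤ u be real numbers with u − l ≤ π. Then the convex hull (over ℝ) of D[l,u] equals P[l,u]. -/

import Mathlib

/-- The arc-cone set `D[l,u] = {(r cos θ, r sin θ) : r ≥ 1, l ≤ θ ≤ u}`. -/
def Darc (l u : ℝ) : Set (ℝ × ℝ) :=
  {p | ∃ r θ : ℝ, 1 ≤ r ∧ l ≤ θ ∧ θ ≤ u ∧ p = (r * Real.cos θ, r * Real.sin θ)}

/-- The polyhedron `P[l,u]` given by the two angular cuts and the chord cut. -/
def Parc (l u : ℝ) : Set (ℝ × ℝ) :=
  {p | Real.sin l * p.1 - Real.cos l * p.2 ≤ 0 ∧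
       Real.sin u * p.1 - Real.cos u * p.2 ≥ 0 ∧
       ((Real.cos l + Real.cos u) / 2) * p.1 + ((Real.sin l + Real.sin u) / 2) * p.2 ≥
         ((Real.cos l + Real.cos u) / 2) ^ 2 + ((Real.sin l + Real.sin u) / 2) ^ 2}

open Real in

lemma key_trig (A B : ℝ) (hA : 0 ≤ A) (hB : 0 ≤ B) (hAB : A + B ≤ π) :
    1 + Real.cos (A + B) ≤ Real.cos A + Real.cos B := by
  have hAπ : A ≤ π := by nlinarith
  have hBπ : B ≤ π := by nlinarith
  have sA : 0 ≤ Real.sin A := Real.sin_nonneg_of_nonneg_of_le_pi hA hAπ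
  have sB : 0 ≤ Real.sin B := Real.sin_nonneg_of_nonneg_of_le_pi hB hBπ
  have hc : Real.cos (π - A) ≤ Real.cos B :=
    Real.cos_le_cos_of_nonneg_of_le_pi hB (by linarith) (by linarith)
  rw [Real.cos_pi_sub] at hc
  have pA := Real.sin_sq_add_cos_sq A
  have pB := Real.sin_sq_add_cos_sq B
  have cA1 := Real.cos_le_one A
  have cB1 := Real.cos_le_one B
  rw [Real.cos_add]
  -- need sin A * sin B ≥ (1 - cos A) * (1 - cos B)
  have hxy : (Real.sin A * Real.sin B)^2 =
      ((1 - Real.cos A) * (1 - Real.cos B))^2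
      + 2 * ((1 - Real.cos A) * (1 - Real.cos B)) * (Real.cos A + Real.cos B) := by
    nlinarith [pA, pB]
  nlinarith [mul_nonneg sA sB, mul_nonneg (sub_nonneg.2 cA1) (sub_nonneg.2 cB1), hxy,
    sq_nonneg (Real.sin A * Real.sin B - (1 - Real.cos A) * (1 - Real.cos B)),
    sq_nonneg (Real.sin A * Real.sin B + (1 - Real.cos A) * (1 - Real.cos B))]

open Real in
lemma mem_Darc_pi (l s h : ℝ) (hh : 0 ≤ h) (hr1 : 1 ≤ s ^ 2 + h ^ 2) :
    (s * Real.cos l - h * Real.sin l, s * Real.sin l + h * Real.cos l) ∈ Darc l (l + π) := by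
  set r : ℝ := Real.sqrt (s ^ 2 + h ^ 2) with hr
  have hr0 : 0 < r := Real.sqrt_pos.2 (by nlinarith)
  have hrsq : r ^ 2 = s ^ 2 + h ^ 2 := Real.sq_sqrt (by nlinarith)
  have hrone : 1 ≤ r := Real.one_le_sqrt.2 hr1
  have hsr : |s / r| ≤ 1 := by
    rw [abs_div, abs_of_pos hr0, div_le_one hr0]
    nlinarith [abs_nonneg s, sq_abs s]
  rw [abs_le] at hsr
  refine ⟨r, l + Real.arccos (s / r), hrone, by linarith [Real.arccos_nonneg (s / r)],
    by linarith [Real.arccos_le_pi (s / r)], ?_⟩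
  have hcos : Real.cos (Real.arccos (s / r)) = s / r := Real.cos_arccos hsr.1 hsr.2
  have hsin : Real.sin (Real.arccos (s / r)) = h / r := by
    rw [Real.sin_arccos]
    rw [show 1 - (s / r) ^ 2 = (h / r) ^ 2 by field_simp; nlinarith]
    exact Real.sqrt_sq (by positivity)
  rw [Real.cos_add, Real.sin_add, hcos, hsin]
  have : r ≠ 0 := ne_of_gt hr0
  ext <;> simp only <;> field_simp <;> ring

open Real in
lemma Darc_subset_Parc (l u : ℝ) (hlu : l ≤ u) (hπ : u - l ≤ π) :
    Darc l u ⊆ Parc l u := by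
  rintro p ⟨r, θ, hr, hlθ, hθu, rfl⟩
  have h1 : 0 ≤ Real.sin (θ - l) :=
    Real.sin_nonneg_of_nonneg_of_le_pi (by linarith) (by linarith)
  have h2 : 0 ≤ Real.sin (u - θ) :=
    Real.sin_nonneg_of_nonneg_of_le_pi (by linarith) (by linarith)
  rw [Real.sin_sub] at h1 h2
  have h3 := key_trig (θ - l) (u - θ) (by linarith) (by linarith) (by linarith)
  rw [show θ - l + (u - θ) = u - l by ring, Real.cos_sub, Real.cos_sub, Real.cos_sub] at h3
  have hneg : (-1 : ℝ) ≤ Real.cos (u - l) := Real.neg_one_le_cos _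
  rw [Real.cos_sub] at hneg
  have pl := Real.sin_sq_add_cos_sq l
  have pu := Real.sin_sq_add_cos_sq u
  refine ⟨?_, ?_, ?_⟩ <;> simp only
  · nlinarith [mul_nonneg (by linarith : (0:ℝ) ≤ r) h1]
  · nlinarith [mul_nonneg (by linarith : (0:ℝ) ≤ r) h2]
  · nlinarith [mul_le_mul_of_nonneg_left h3 (by linarith : (0:ℝ) ≤ r - 1)]

lemma convex_Parc (l u : ℝ) : Convex ℝ (Parc l u) := by
  intro p hp q hq a b ha hb hab
  obtain ⟨hp1, hp2, hp3⟩ := hp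
  obtain ⟨hq1, hq2, hq3⟩ := hq
  refine ⟨?_, ?_, ?_⟩ <;>
  · simp only [Prod.fst_add, Prod.snd_add, Prod.smul_fst, Prod.smul_snd, smul_eq_mul]
    nlinarith

open Real in
lemma Parc_subset_hull (l u : ℝ) (hlu : l ≤ u) (hπ : u - l ≤ π) :
    Parc l u ⊆ convexHull ℝ (Darc l u) := by
  intro p hp
  obtain ⟨hp1, hp2, hp3⟩ := hp
  have pl := Real.sin_sq_add_cos_sq l
  have pu := Real.sin_sq_add_cos_sq u
  rcases eq_or_lt_of_le hlu with heq | hlt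
  · -- case l = u
    subst heq
    have ht : 1 ≤ Real.cos l * p.1 + Real.sin l * p.2 := by nlinarith
    apply subset_convexHull
    refine ⟨Real.cos l * p.1 + Real.sin l * p.2, l, ht, le_refl l, le_refl l, ?_⟩
    have h0 : Real.sin l * p.1 - Real.cos l * p.2 = 0 := le_antisymm hp1 hp2
    ext <;> simp only
    · linear_combination Real.sin l * h0 - p.1 * pl
    · linear_combination -Real.cos l * h0 - p.2 * pl
  rcases eq_or_lt_of_le hπ with heqπ | hltπ
  · -- case u = l + π
    have hu : u = l + π := by linarith
    subst hu
    rw [Real.sin_add_pi] at hp2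
    rw [Real.cos_add_pi] at hp2
    set s : ℝ := Real.cos l * p.1 + Real.sin l * p.2 with hs
    set h : ℝ := Real.cos l * p.2 - Real.sin l * p.1 with hh
    have hh0 : 0 ≤ h := by simp only [hh]; nlinarith
    set T : ℝ := |s| + 1 with hT
    have hT1 : 1 ≤ (s + T) ^ 2 + h ^ 2 := by
      have := neg_abs_le s
      nlinarith [sq_nonneg h]
    have hT2 : 1 ≤ (s - T) ^ 2 + h ^ 2 := by
      have := le_abs_self s
      nlinarith [sq_nonneg h]
    have hq1 := mem_Darc_pi l (s + T) h hh0 hT1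
    have hq2 := mem_Darc_pi l (s - T) h hh0 hT2
    have hcomb := (convex_convexHull ℝ (Darc l (l + π)))
      (subset_convexHull ℝ _ hq1) (subset_convexHull ℝ _ hq2)
      (by norm_num : (0:ℝ) ≤ 1/2) (by norm_num : (0:ℝ) ≤ 1/2) (by norm_num)
    convert hcomb using 1
    have e1 : p.1 = s * Real.cos l - h * Real.sin l := by
      simp only [hs, hh]; linear_combination -p.1 * pl
    have e2 : p.2 = s * Real.sin l + h * Real.cos l := by
      simp only [hs, hh]; linear_combination -p.2 * pl
    ext
    · simp only [Prod.fst_add, Prod.smul_fst, smul_eq_mul]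
      rw [e1]; ring
    · simp only [Prod.snd_add, Prod.smul_snd, smul_eq_mul]
      rw [e2]; ring
  · -- main case l < u < l + π
    have hS : 0 < Real.sin (u - l) := Real.sin_pos_of_pos_of_lt_pi (by linarith) (by linarith)
    rw [Real.sin_sub] at hS
    set S : ℝ := Real.sin u * Real.cos l - Real.cos u * Real.sin l with hSdef
    set α : ℝ := (Real.sin u * p.1 - Real.cos u * p.2) / S with hα
    set β : ℝ := (Real.cos l * p.2 - Real.sin l * p.1) / S with hβ
    have hα0 : 0 ≤ α := div_nonneg (by linarith) (le_of_lt hS)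
    have hβ0 : 0 ≤ β := div_nonneg (by linarith) (le_of_lt hS)
    have hSne : S ≠ 0 := ne_of_gt hS
    have e1 : p.1 = α * Real.cos l + β * Real.cos u := by
      simp only [hα, hβ]; field_simp; ring
    have e2 : p.2 = α * Real.sin l + β * Real.sin u := by
      simp only [hα, hβ]; field_simp; ring
    have hC : Real.cos π < Real.cos (u - l) :=
      Real.cos_lt_cos_of_nonneg_of_le_pi (by linarith) (le_refl π) (by linarith)
    rw [Real.cos_pi, Real.cos_sub] at hC
    have e3 : (Real.cos l + Real.cos u) / 2 * p.1 + (Real.sin l + Real.sin u) / 2 * p.2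
        = (α + β) * (1 + (Real.cos u * Real.cos l + Real.sin u * Real.sin l)) / 2 := by
      rw [e1, e2]; linear_combination (α / 2) * pl + (β / 2) * pu
    have e4 : ((Real.cos l + Real.cos u) / 2) ^ 2 + ((Real.sin l + Real.sin u) / 2) ^ 2
        = (1 + (Real.cos u * Real.cos l + Real.sin u * Real.sin l)) / 2 := by
      linear_combination (1 / 4 : ℝ) * pl + (1 / 4 : ℝ) * pu
    rw [e3, e4] at hp3
    have hsum : 1 ≤ α + β := by nlinarith [hp3, hC]
    set t : ℝ := α + β with ht
    have ht0 : 0 < t := by linarith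
    have hq1 : (t * Real.cos l, t * Real.sin l) ∈ Darc l u := by
      exact ⟨t, l, hsum, le_refl l, hlu, rfl⟩
    have hq2 : (t * Real.cos u, t * Real.sin u) ∈ Darc l u := by
      exact ⟨t, u, hsum, hlu, le_refl u, rfl⟩
    have hcomb := (convex_convexHull ℝ (Darc l u))
      (subset_convexHull ℝ _ hq1) (subset_convexHull ℝ _ hq2)
      (div_nonneg hα0 (le_of_lt ht0)) (div_nonneg hβ0 (le_of_lt ht0))
      (by field_simp; exact ht.symm)
    convert hcomb using 1
    have htne : t ≠ 0 := ne_of_gt ht0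
    ext
    · simp only [Prod.fst_add, Prod.smul_fst, smul_eq_mul]
      rw [e1]; field_simp
    · simp only [Prod.snd_add, Prod.smul_snd, smul_eq_mul]
      rw [e2]; field_simp

theorem stmt_14 (l u : ℝ) (hlu : l ≤ u) (hπ : u - l ≤ Real.pi) :
    convexHull ℝ (Darc l u) = Parc l u := by
  apply Set.Subset.antisymm
  · exact convexHull_min (Darc_subset_Parc l u hlu hπ) (convex_Parc l u)
  · exact Parc_subset_hull l u hlu hπ
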